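/- Let t ≥ 1 be an integer and let λ ∈ Z/tZ be a unit such that λ − 1 is also a unit in Z/tZ. Let S be a finite group with elements x_S, y_S ∈ S, let T = Z/tZ × Z/tZ (written additively), and let ψ : S → Aut(T) be a group homomorphism such that ψ(x_S)(a, b) = (a, λb) and ψ(y_S)(a, b) = (λa, b) for all (a, b) ∈ T. Form the semidirect product G = T ⋊_ψ S, and set x = ((1, 0), x_S) and y = ((0, 1), y_S) in G. Then the order of x·y in G equals the order of x_S·y_S in S. -/

import Mathlib

/-- Lemma 9.1. Let `λ` be a unit of `Z/tZ` with `λ − 1` also a unit, let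
`S` be a finite group with elements `x_S, y_S`, let `T = Z/tZ × Z/tZ`, and let
`ψ : S → Aut T` act with `ψ(x_S)(a,b) = (a, λb)` and `ψ(y_S)(a,b) = (λa, b)`. In the
semidirect product `G = T ⋊_ψ S`, the element `x·y` with `x = ((1,0), x_S)` and
`y = ((0,1), y_S)` has the same order as `x_S·y_S` in `S`. -/
theorem order_xy_in_semidirect_product
    (t : ℕ) (ht : 1 ≤ t) (lam : ZMod t) (hlam : IsUnit lam) (hlam1 : IsUnit (lam - 1))
    (S : Type*) [Group S] [Finite S] (xS yS : S)
    (ψ : S →* MulAut (Multiplicative (ZMod t × ZMod t)))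
    (hψx : ∀ v : ZMod t × ZMod t,
      ψ xS (Multiplicative.ofAdd v) = Multiplicative.ofAdd (v.1, lam * v.2))
    (hψy : ∀ v : ZMod t × ZMod t,
      ψ yS (Multiplicative.ofAdd v) = Multiplicative.ofAdd (lam * v.1, v.2)) :
    orderOf ((⟨Multiplicative.ofAdd ((1 : ZMod t), (0 : ZMod t)), xS⟩ :
        Multiplicative (ZMod t × ZMod t) ⋊[ψ] S) *
      (⟨Multiplicative.ofAdd ((0 : ZMod t), (1 : ZMod t)), yS⟩ :
        Multiplicative (ZMod t × ZMod t) ⋊[ψ] S)) = orderOf (xS * yS) := by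
  set s : S := xS * yS with hs
  set g : Multiplicative (ZMod t × ZMod t) ⋊[ψ] S :=
    (⟨Multiplicative.ofAdd ((1 : ZMod t), (0 : ZMod t)), xS⟩ *
      ⟨Multiplicative.ofAdd ((0 : ZMod t), (1 : ZMod t)), yS⟩) with hg
  -- the action of s is scalar multiplication by lam
  have hψs : ∀ v : ZMod t × ZMod t,
      ψ s (Multiplicative.ofAdd v) = Multiplicative.ofAdd (lam * v.1, lam * v.2) := by
    intro v
    rw [hs, map_mul, MulAut.mul_apply, hψy, hψx]
  have hψsk : ∀ (k : ℕ) (v : ZMod t × ZMod t),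
      (ψ s ^ k) (Multiplicative.ofAdd v) = Multiplicative.ofAdd (lam ^ k * v.1, lam ^ k * v.2) := by
    intro k
    induction k with
    | zero => intro v; simp
    | succ k ih =>
      intro v
      rw [pow_succ', MulAut.mul_apply, ih, hψs]
      congr 1
      simp only [Prod.mk.injEq]
      constructor <;> ring
  set n : ℕ := orderOf s with hn
  have hlamn : lam ^ n = 1 := by
    have h1 : (ψ s ^ n) (Multiplicative.ofAdd ((1 : ZMod t), (0 : ZMod t))) =
        Multiplicative.ofAdd ((1 : ZMod t), (0 : ZMod t)) := by
      rw [← map_pow, pow_orderOf_eq_one, map_one, MulAut.one_apply]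
    rw [hψsk] at h1
    have := congrArg (fun z => (Multiplicative.toAdd z).1) h1
    simpa using this
  -- compute powers of g
  have hg_left : g.left = Multiplicative.ofAdd ((1 : ZMod t), lam) ∧ g.right = s := by
    constructor
    · rw [hg, SemidirectProduct.mul_left]
      show Multiplicative.ofAdd ((1 : ZMod t), (0 : ZMod t)) *
        ψ xS (Multiplicative.ofAdd ((0 : ZMod t), (1 : ZMod t))) = _
      rw [hψx]
      simp [← ofAdd_add, Prod.ext_iff]
    · rfl
  have hpow : ∀ k : ℕ, g ^ k =
      ⟨Multiplicative.ofAdd (∑ i ∈ Finset.range k, lam ^ i,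
        lam * ∑ i ∈ Finset.range k, lam ^ i), s ^ k⟩ := by
    intro k
    induction k with
    | zero => ext <;> simp
    | succ k ih =>
      rw [pow_succ', ih]
      ext : 1
      · rw [SemidirectProduct.mul_left]
        show g.left * ψ g.right _ = _
        rw [hg_left.1, hg_left.2, hψs, ← ofAdd_add]
        congr 1
        simp only [Prod.mk_add_mk, Prod.mk.injEq]
        rw [geom_sum_succ]
        constructor <;> ring
      · rw [SemidirectProduct.mul_right]
        show g.right * s ^ k = s ^ (k + 1)
        rw [hg_left.2, ← pow_succ']
  -- g^n = 1
  have hsum : (∑ i ∈ Finset.range n, lam ^ i) = 0 := by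
    have h := geom_sum_mul lam n
    rw [hlamn, sub_self] at h
    exact hlam1.mul_left_cancel (by rw [mul_comm, h, mul_zero])
  have hgn : g ^ n = 1 := by
    rw [hpow n, hsum, pow_orderOf_eq_one]
    ext <;> simp
  have h1 : orderOf g ∣ n := orderOf_dvd_of_pow_eq_one hgn
  have h2 : n ∣ orderOf g := by
    have : SemidirectProduct.rightHom g = s := hg_left.2
    calc n = orderOf (SemidirectProduct.rightHom g) := by rw [this]
    _ ∣ orderOf g := orderOf_map_dvd _ _
  exact Nat.dvd_antisymm h1 h2
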